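/- For every worm B with all modalities ≤ α and length |B| ≤ n, GLP_Λ derives ⟨α⟩ⁿ⊤ → B. -/

import Mathlib

/-- Formulas of the polymodal provability logic `GLP_Λ`, with modalities
indexed by ordinals.  Other connectives are defined from `⊥`, `→` and `[α]`. -/
inductive GLPFormula : Type 1 where
  | bot : GLPFormula
  | impl : GLPFormula → GLPFormula → GLPFormula
  | box : Ordinal → GLPFormula → GLPFormula

namespace GLPFormula

def neg (φ : GLPFormula) : GLPFormula := impl φ bot
def top : GLPFormula := neg bot
def conj (φ ψ : GLPFormula) : GLPFormula := neg (impl φ (neg ψ))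
def iff' (φ ψ : GLPFormula) : GLPFormula := conj (impl φ ψ) (impl ψ φ)
def dia (α : Ordinal) (φ : GLPFormula) : GLPFormula := neg (box α (neg φ))

end GLPFormula

open GLPFormula

/-- Hilbert-style provability in `GLP_Λ`: classical tautologies, `GL` for each
modality `[α]` with `α < Λ`, monotonicity `[β]φ → [α]φ` and negative
introspection `⟨β⟩φ → [α]⟨β⟩φ` for `β < α < Λ`. -/
inductive GLP (Λ : Ordinal) : GLPFormula → Prop where
  | ax1 (φ ψ) : GLP Λ (impl φ (impl ψ φ))
  | ax2 (φ ψ χ) : GLP Λ (impl (impl φ (impl ψ χ)) (impl (impl φ ψ) (impl φ χ)))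
  | ax3 (φ ψ) : GLP Λ (impl (impl (neg φ) (neg ψ)) (impl ψ φ))
  | dist {α} (h : α < Λ) (φ ψ) :
      GLP Λ (impl (box α (impl φ ψ)) (impl (box α φ) (box α ψ)))
  | lob {α} (h : α < Λ) (φ) : GLP Λ (impl (box α (impl (box α φ) φ)) (box α φ))
  | mono {α β} (hβα : β < α) (hα : α < Λ) (φ) : GLP Λ (impl (box β φ) (box α φ))
  | introspec {α β} (hβα : β < α) (hα : α < Λ) (φ) :
      GLP Λ (impl (dia β φ) (box α (dia β φ)))
  | mp {φ ψ} : GLP Λ (impl φ ψ) → GLP Λ φ → GLP Λ ψ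
  | nec {α} (h : α < Λ) {φ} : GLP Λ φ → GLP Λ (box α φ)

/-- Worms are iterated diamonds over `⊤`; we identify a worm with its list of
ordinal modalities (leftmost/outermost first). -/
def wormFormula : List Ordinal → GLPFormula
  | [] => GLPFormula.top
  | α :: A => dia α (wormFormula A)

namespace GLPAux

open GLPFormula

variable {Λ : Ordinal}

lemma glp_id (φ : GLPFormula) : GLP Λ (impl φ φ) :=
  GLP.mp (GLP.mp (GLP.ax2 φ (impl φ φ) φ) (GLP.ax1 φ (impl φ φ))) (GLP.ax1 φ φ)

lemma glp_trans {φ ψ χ : GLPFormula} (h1 : GLP Λ (impl φ ψ)) (h2 : GLP Λ (impl ψ χ)) :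
    GLP Λ (impl φ χ) :=
  GLP.mp (GLP.mp (GLP.ax2 φ ψ χ) (GLP.mp (GLP.ax1 (impl ψ χ) φ) h2)) h1

lemma glp_mp_left {φ ψ : GLPFormula} (h : GLP Λ (impl φ ψ)) (χ : GLPFormula) :
    GLP Λ (impl (impl ψ χ) (impl φ χ)) := by
  have b : GLP Λ (impl (impl ψ χ) (impl φ (impl ψ χ))) := GLP.ax1 _ _
  have b2 : GLP Λ (impl (impl ψ χ) (impl (impl φ ψ) (impl φ χ))) :=
    glp_trans b (GLP.ax2 φ ψ χ)
  have c : GLP Λ (impl (impl ψ χ) (impl φ ψ)) := GLP.mp (GLP.ax1 _ _) h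
  exact GLP.mp (GLP.mp (GLP.ax2 (impl ψ χ) (impl φ ψ) (impl φ χ)) b2) c

lemma glp_contrapose {φ ψ : GLPFormula} (h : GLP Λ (impl φ ψ)) :
    GLP Λ (impl (neg ψ) (neg φ)) :=
  glp_mp_left h GLPFormula.bot

lemma glp_box_mono {α : Ordinal} (hα : α < Λ) {φ ψ : GLPFormula}
    (h : GLP Λ (impl φ ψ)) : GLP Λ (impl (box α φ) (box α ψ)) :=
  GLP.mp (GLP.dist hα φ ψ) (GLP.nec hα h)

lemma glp_dia_mono {α : Ordinal} (hα : α < Λ) {φ ψ : GLPFormula}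
    (h : GLP Λ (impl φ ψ)) : GLP Λ (impl (dia α φ) (dia α ψ)) :=
  glp_contrapose (glp_box_mono hα (glp_contrapose h))

lemma glp_dia_down {γ α : Ordinal} (hγα : γ ≤ α) (hα : α < Λ) (φ : GLPFormula) :
    GLP Λ (impl (dia α φ) (dia γ φ)) := by
  rcases lt_or_eq_of_le hγα with h | rfl
  · exact glp_contrapose (GLP.mono h hα (neg φ))
  · exact glp_id _

lemma glp_imp_top (φ : GLPFormula) : GLP Λ (impl φ GLPFormula.top) :=
  GLP.mp (GLP.ax1 _ _) (glp_id GLPFormula.bot)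

end GLPAux

open GLPAux

/-- For every worm `B` with all modalities `≤ α` and length
`|B| ≤ n`, `GLP_Λ` derives `⟨α⟩ⁿ⊤ → B`. -/
theorem glp_iterated_dia_to_small_worm (Λ α : Ordinal) (hα : α < Λ) (n : ℕ)
    (B : List Ordinal) (hB : ∀ γ ∈ B, γ ≤ α) (hlen : B.length ≤ n) :
    GLP Λ (impl (wormFormula (List.replicate n α)) (wormFormula B)) := by
  induction B generalizing n with
  | nil => exact glp_imp_top _
  | cons γ B' ih =>
    cases n with
    | zero => simp at hlen
    | succ m =>
      have IH : GLP Λ (impl (wormFormula (List.replicate m α)) (wormFormula B')) :=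
        ih m (fun δ hδ => hB δ (List.mem_cons_of_mem _ hδ)) (Nat.succ_le_succ_iff.mp hlen)
      have h1 : GLP Λ (impl (wormFormula (List.replicate (m+1) α))
          (dia α (wormFormula B'))) := by
        simpa [List.replicate_succ, wormFormula] using glp_dia_mono hα IH
      exact glp_trans h1 (glp_dia_down (hB γ (List.mem_cons_self)) hα _)
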